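/- Let α be a countable ordinal with α > 0, and let ⟨x_ξ : ξ < α⟩ and ⟨p_ξ : ξ < α⟩ be sequences of subsets of ω×ω such that: (a) each p_ξ is a standard (FIN×FIN)-positive set and p_ξ ⊆ x_ξ; (b) for all ζ < ξ < α, x_ξ \ p_ζ ∈ FIN×FIN; (c) for every ξ < α and every n ∈ ω, the set {ζ < ξ : (x_ξ ∩ x_ζ)(n) is infinite} is finite; (d) for every ξ < α and every n ∈ dom(p_ξ), the ideal on p_ξ(n) generated by the finite subsets of p_ξ(n) together with the sets {p_ξ(n) ∩ x_ζ(n) : ζ < α and ζ ∉ F(ξ,n)} is a proper ideal on p_ξ(n), where F(ξ,n) = {ζ ≤ ξ : p_ξ(n) \ x_ζ(n) is finite}. Then there exists a (FIN×FIN)-positive set p ⊆ ω×ω such that p \ p_ξ ∈ FIN×FIN for every ξ < α, and for every m ∈ ω the set {ξ < α : (p ∩ x_ξ)(m) is infinite} is finite. -/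

import Mathlib

/-- The `n`-th column of a subset of `ω × ω`. -/
def col (p : Set (ℕ × ℕ)) (n : ℕ) : Set ℕ := {m | (n, m) ∈ p}

/-- The ideal FIN × FIN : all but finitely many columns are finite. -/
def finTimesFin : Set (Set (ℕ × ℕ)) := {p | {n | (col p n).Infinite}.Finite}

/-- `p` is (FIN×FIN)-positive. -/
def IsPositive (p : Set (ℕ × ℕ)) : Prop := p ∉ finTimesFin

/-- The domain of `p`: the set of indices of nonempty columns. -/
def domp (p : Set (ℕ × ℕ)) : Set ℕ := {n | col p n ≠ ∅}

/-- `p` is a standard positive set. -/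
def IsStandard (p : Set (ℕ × ℕ)) : Prop :=
  IsPositive p ∧ ∀ n ∈ domp p, (col p n).Infinite

/-- `F(ξ, n)` from the proof of Theorem 3.7: those `ζ ≤ ξ` with
`p_ξ(n) ⊆* x_ζ(n)`. -/
def Fset (p x : Ordinal → Set (ℕ × ℕ)) (ξ : Ordinal) (n : ℕ) : Set Ordinal :=
  {ζ | ζ ≤ ξ ∧ (col (p ξ) n \ col (x ζ) n).Finite}

lemma col_diff (a b : Set (ℕ × ℕ)) (n : ℕ) : col (a \ b) n = col a n \ col b n := rfl

lemma col_inter (a b : Set (ℕ × ℕ)) (n : ℕ) : col (a ∩ b) n = col a n ∩ col b n := rfl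

lemma col_mono {a b : Set (ℕ × ℕ)} (h : a ⊆ b) (n : ℕ) : col a n ⊆ col b n :=
  fun _ hm => h hm

/-- The successor step in the construction of Theorem 3.7: given sequences of
length a countable ordinal `α > 0` satisfying (a)-(d), there is a positive `p`
below every `p_ξ` whose intersection with each `x_ξ` has, for each column `m`,
only finitely many `ξ < α` giving an infinite column. -/
theorem successor_step (α : Ordinal) (hα0 : 0 < α) (hαctble : α.card ≤ Cardinal.aleph0)
    (x p : Ordinal → Set (ℕ × ℕ))
    (ha : ∀ ξ < α, IsStandard (p ξ) ∧ p ξ ⊆ x ξ)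
    (hb : ∀ ζ ξ : Ordinal, ζ < ξ → ξ < α → x ξ \ p ζ ∈ finTimesFin)
    (hc : ∀ ξ < α, ∀ n : ℕ, {ζ : Ordinal | ζ < ξ ∧ (col (x ξ ∩ x ζ) n).Infinite}.Finite)
    (hd : ∀ ξ < α, ∀ n ∈ domp (p ξ), ∀ G : Set Ordinal, G.Finite →
      (∀ ζ ∈ G, ζ < α ∧ ζ ∉ Fset p x ξ n) →
      (col (p ξ) n \ ⋃ ζ ∈ G, (col (p ξ) n ∩ col (x ζ) n)).Infinite) :
    ∃ q : Set (ℕ × ℕ), IsPositive q ∧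
      (∀ ξ < α, q \ p ξ ∈ finTimesFin) ∧
      (∀ m : ℕ, {ξ : Ordinal | ξ < α ∧ (col (q ∩ x ξ) m).Infinite}.Finite) := by
  classical
  -- enumerate the ordinals below α
  have hIioc : (Set.Iio α).Countable := by
    have h1 : Cardinal.mk (Set.Iio α) ≤ Cardinal.aleph0 := by
      rw [Ordinal.mk_Iio_ordinal]
      exact Cardinal.lift_le_aleph0.mpr hαctble
    exact Cardinal.le_aleph0_iff_set_countable.mp h1
  obtain ⟨e, he⟩ := hIioc.exists_eq_range ⟨0, hα0⟩
  have he1 : ∀ j, e j < α := by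
    intro j
    have : e j ∈ Set.Iio α := he ▸ Set.mem_range_self j
    exact this
  have he2 : ∀ ζ, ζ < α → ∃ j, e j = ζ := by
    intro ζ hζ
    have : ζ ∈ Set.range e := he ▸ hζ
    exact this
  -- the "diagonal" nondecreasing sequence ξ k
  set xi : ℕ → Ordinal := fun k => (Finset.range (k + 1)).sup' ⟨0, by simp⟩ e with hxi
  have hxiα : ∀ k, xi k < α := by
    intro k
    refine (Finset.sup'_lt_iff _).mpr ?_
    intro j _
    exact he1 j
  have hlexi : ∀ j k, j ≤ k → e j ≤ xi k := by
    intro j k hjk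
    exact Finset.le_sup' e (Finset.mem_range.mpr (Nat.lt_succ_of_le hjk))
  -- choose the columns n k
  have H1 : ∀ k N, ∃ n, N < n ∧ (col (p (xi k)) n).Infinite ∧
      ∀ j ≤ k, e j < xi k → (col (p (xi k)) n \ col (p (e j)) n).Finite := by
    intro k N
    have hpos : {n | (col (p (xi k)) n).Infinite}.Infinite :=
      Set.not_infinite.not_right.mp (fun h => (ha _ (hxiα k)).1.1 h)
    have hbadfin : (⋃ j ∈ Finset.range (k + 1),
        {n | e j < xi k ∧ (col (x (xi k) \ p (e j)) n).Infinite}).Finite := by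
      apply Set.Finite.biUnion (Finset.range (k + 1)).finite_toSet
      intro j _
      by_cases hj : e j < xi k
      · have := hb (e j) (xi k) hj (hxiα k)
        exact this.subset (fun n hn => hn.2)
      · have : {n | e j < xi k ∧ (col (x (xi k) \ p (e j)) n).Infinite} = ∅ := by
          ext n; simp [hj]
        rw [this]; exact Set.finite_empty
    have hA : ({n | (col (p (xi k)) n).Infinite} \
        ((⋃ j ∈ Finset.range (k + 1),
          {n | e j < xi k ∧ (col (x (xi k) \ p (e j)) n).Infinite}) ∪ Set.Iic N)).Infinite :=
      hpos.diff (hbadfin.union (Set.finite_Iic N))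
    obtain ⟨n, hn⟩ := hA.nonempty
    have hn1 : (col (p (xi k)) n).Infinite := hn.1
    have hn2 : n ∉ _ := hn.2
    rw [Set.mem_union, not_or] at hn2
    refine ⟨n, by simpa using hn2.2, hn1, ?_⟩
    intro j hjk hej
    have hnb : ¬ (e j < xi k ∧ (col (x (xi k) \ p (e j)) n).Infinite) := by
      intro hcontra
      exact hn2.1 (Set.mem_biUnion (Finset.mem_coe.mpr (Finset.mem_range.mpr
        (Nat.lt_succ_of_le hjk))) hcontra)
    have hfin : (col (x (xi k) \ p (e j)) n).Finite := by
      rcases Set.not_infinite.mp (fun h => hnb ⟨hej, h⟩) with h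
      exact h
    apply hfin.subset
    intro m hm
    exact ⟨(ha _ (hxiα k)).2 hm.1, hm.2⟩
  choose f hf1 hf2 hf3 using H1
  set nk : ℕ → ℕ := fun k => Nat.rec (f 0 0) (fun k ih => f (k + 1) ih) k with hnk
  have nk_succ : ∀ k, nk (k + 1) = f (k + 1) (nk k) := fun k => rfl
  have nkmono : StrictMono nk := strictMono_nat_of_lt_succ (fun k => by
    rw [nk_succ]; exact hf1 (k + 1) (nk k))
  have nkprop : ∀ k, (col (p (xi k)) (nk k)).Infinite ∧
      ∀ j ≤ k, e j < xi k → (col (p (xi k)) (nk k) \ col (p (e j)) (nk k)).Finite := by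
    intro k
    cases k with
    | zero => exact ⟨hf2 0 0, hf3 0 0⟩
    | succ k => rw [nk_succ]; exact ⟨hf2 (k + 1) (nk k), hf3 (k + 1) (nk k)⟩
  -- choose, within each column nk k, the increasing sequence a k
  have H2 : ∀ k j N, ∃ a, N < a ∧ a ∈ col (p (xi k)) (nk k) ∧
      ∀ i ≤ j, e i ∉ Fset p x (xi k) (nk k) → a ∉ col (x (e i)) (nk k) := by
    intro k j N
    set F := Fset p x (xi k) (nk k) with hF
    set G : Set Ordinal := (e '' Set.Iic j) \ F with hG
    have hGfin : G.Finite := (((Set.finite_Iic j).image e).diff)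
    have hGprop : ∀ ζ ∈ G, ζ < α ∧ ζ ∉ F := by
      rintro ζ ⟨⟨i, _, rfl⟩, hζF⟩
      exact ⟨he1 i, hζF⟩
    have hdom : nk k ∈ domp (p (xi k)) := by
      have := (nkprop k).1
      simpa [domp] using this.nonempty.ne_empty
    have hinf := hd (xi k) (hxiα k) (nk k) hdom G hGfin hGprop
    obtain ⟨a, haA, haN⟩ := hinf.exists_gt N
    refine ⟨a, haN, haA.1, ?_⟩
    intro i hij hiF hax
    apply haA.2
    apply Set.mem_biUnion (show e i ∈ G from ⟨⟨i, hij, rfl⟩, hiF⟩)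
    exact ⟨haA.1, hax⟩
  choose g hg1 hg2 hg3 using H2
  set a : ℕ → ℕ → ℕ := fun k j => Nat.rec (g k 0 0) (fun j ih => g k (j + 1) ih) j with haa
  have a_succ : ∀ k j, a k (j + 1) = g k (j + 1) (a k j) := fun k j => rfl
  have amono : ∀ k, StrictMono (a k) := fun k => strictMono_nat_of_lt_succ (fun j => by
    rw [a_succ]; exact hg1 k (j + 1) (a k j))
  have amem : ∀ k j, a k j ∈ col (p (xi k)) (nk k) := by
    intro k j
    cases j with
    | zero => exact hg2 k 0 0
    | succ j => rw [a_succ]; exact hg2 k (j + 1) (a k j)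
  have aavoid : ∀ k j i, i ≤ j → e i ∉ Fset p x (xi k) (nk k) →
      a k j ∉ col (x (e i)) (nk k) := by
    intro k j i hij hiF
    cases j with
    | zero => exact hg3 k 0 0 i hij hiF
    | succ j => rw [a_succ]; exact hg3 k (j + 1) (a k j) i hij hiF
  -- the witness
  set q : Set (ℕ × ℕ) := {nm | ∃ k, nm.1 = nk k ∧ ∃ j, nm.2 = a k j} with hq
  have colq1 : ∀ k, col q (nk k) = Set.range (a k) := by
    intro k
    ext m
    constructor
    · rintro ⟨k', hk', j, rfl⟩
      have : k = k' := nkmono.injective hk'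
      exact ⟨j, by rw [this]⟩
    · rintro ⟨j, rfl⟩
      exact ⟨k, rfl, j, rfl⟩
  have colq2 : ∀ m, m ∉ Set.range nk → col q m = ∅ := by
    intro m hm
    ext m'
    simp only [Set.mem_empty_iff_false, iff_false]
    rintro ⟨k, hk, _⟩
    exact hm ⟨k, hk.symm⟩
  have Ffin : ∀ k, (Fset p x (xi k) (nk k)).Finite := by
    intro k
    have hsub : Fset p x (xi k) (nk k) ⊆
        insert (xi k) {ζ | ζ < xi k ∧ (col (x (xi k) ∩ x ζ) (nk k)).Infinite} := by
      rintro ζ ⟨hle, hfin⟩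
      rcases eq_or_lt_of_le hle with h | h
      · exact Set.mem_insert_iff.mpr (Or.inl h)
      · right
        refine ⟨h, ?_⟩
        have hinf : (col (p (xi k)) (nk k) \
            (col (p (xi k)) (nk k) \ col (x ζ) (nk k))).Infinite :=
          ((nkprop k).1).diff hfin
        apply hinf.mono
        intro m hm
        rw [col_inter]
        refine ⟨(ha _ (hxiα k)).2 hm.1, ?_⟩
        by_contra hmx
        exact hm.2 ⟨hm.1, hmx⟩
    exact ((hc (xi k) (hxiα k) (nk k)).insert (xi k)).subset hsub
  refine ⟨q, ?_, ?_, ?_⟩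
  · -- positivity
    intro hfin
    have hsub : Set.range nk ⊆ {n | (col q n).Infinite} := by
      rintro n ⟨k, rfl⟩
      rw [Set.mem_setOf_eq, colq1]
      exact Set.infinite_range_of_injective (amono k).injective
    exact (Set.infinite_range_of_injective nkmono.injective) (hfin.subset hsub)
  · -- q is almost contained in every p ζ
    intro ζ hζ
    obtain ⟨j, rfl⟩ := he2 ζ hζ
    have hsub : {n | (col (q \ p (e j)) n).Infinite} ⊆ nk '' Set.Iio j := by
      intro m hm
      rw [Set.mem_setOf_eq, col_diff] at hm
      by_cases hmr : m ∈ Set.range nk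
      · obtain ⟨k, rfl⟩ := hmr
        rcases lt_or_ge k j with hkj | hkj
        · exact ⟨k, hkj, rfl⟩
        · exfalso
          rw [colq1] at hm
          have hrange : Set.range (a k) ⊆ col (p (xi k)) (nk k) := by
            rintro m' ⟨i, rfl⟩; exact amem k i
          rcases eq_or_lt_of_le (hlexi j k hkj) with hcase | hcase
          · -- e j = xi k, so the difference is empty
            apply hm
            apply Set.Finite.subset (Set.finite_empty)
            intro m' hm'
            exact hm'.2 (hcase ▸ hrange hm'.1)
          · -- e j < xi k : use the choice of nk k
            have hfin := (nkprop k).2 j hkj hcase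
            apply hm
            apply hfin.subset
            intro m' hm'
            exact ⟨hrange hm'.1, hm'.2⟩
      · rw [colq2 m hmr] at hm
        exact absurd (Set.finite_empty.subset (Set.diff_subset)) hm
    exact ((Set.finite_Iio j).image nk).subset hsub
  · -- each column meets only finitely many x ξ infinitely
    intro m
    by_cases hmr : m ∈ Set.range nk
    · obtain ⟨k, rfl⟩ := hmr
      apply (Ffin k).subset
      rintro ξ ⟨hξα, hξinf⟩
      by_contra hξF
      obtain ⟨j, rfl⟩ := he2 ξ hξα
      rw [col_inter, colq1] at hξinf
      apply hξinf
      apply Set.Finite.subset ((Set.finite_Iio j).image (a k))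
      rintro m' ⟨⟨i, rfl⟩, hmx⟩
      rcases lt_or_ge i j with hij | hij
      · exact ⟨i, hij, rfl⟩
      · exact absurd hmx (aavoid k i j hij hξF)
    · have : {ξ : Ordinal | ξ < α ∧ (col (q ∩ x ξ) m).Infinite} = ∅ := by
        ext ξ
        simp only [Set.mem_setOf_eq, Set.mem_empty_iff_false, iff_false, not_and]
        intro _
        rw [col_inter, colq2 m hmr]
        simp [Set.not_infinite]
      rw [this]; exact Set.finite_empty
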